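/- The polynomial F = (p2*q1 - p1*q2)^2 - (2*q1^4 + 2*q1^2*q2^2 + 2*a*q1^2 + p1^2)*(a-b) is a first integral of the Hamiltonian system with Hamiltonian H = (p1^2+p2^2)/2 + (q1^2+q2^2)^2 + a*q1^2 + b*q2^2, i.e., the Poisson bracket {H, F} = H_{p1} F_{q1} + H_{p2} F_{q2} - H_{q1} F_{p1} - H_{q2} F_{p2} vanishes identically. -/

import Mathlib

/-- `F` is a first integral of the Vanhaecke system: the Poisson bracket
`{H,F} = H_{p1} F_{q1} + H_{p2} F_{q2} - H_{q1} F_{p1} - H_{q2} F_{p2}`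
vanishes identically. -/
theorem vanhaecke_F_first_integral (a b : ℝ) (H F : ℝ → ℝ → ℝ → ℝ → ℝ)
    (hH : ∀ q1 q2 p1 p2, H q1 q2 p1 p2 =
      (p1^2+p2^2)/2 + (q1^2+q2^2)^2 + a*q1^2 + b*q2^2)
    (hF : ∀ q1 q2 p1 p2, F q1 q2 p1 p2 =
      (p2*q1 - p1*q2)^2 - (2*q1^4 + 2*q1^2*q2^2 + 2*a*q1^2 + p1^2)*(a-b)) :
    ∀ q1 q2 p1 p2 : ℝ,
      deriv (fun x => H q1 q2 x p2) p1 * deriv (fun x => F x q2 p1 p2) q1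
      + deriv (fun x => H q1 q2 p1 x) p2 * deriv (fun x => F q1 x p1 p2) q2
      - deriv (fun x => H x q2 p1 p2) q1 * deriv (fun x => F q1 q2 x p2) p1
      - deriv (fun x => H q1 x p1 p2) q2 * deriv (fun x => F q1 q2 p1 x) p2 = 0 := by
  intro q1 q2 p1 p2
  have eHp1 : (fun x => H q1 q2 x p2)
      = fun x => (x^2 + p2^2)/2 + ((q1^2+q2^2)^2 + a*q1^2 + b*q2^2) :=
    funext fun x => by rw [hH]; try ring
  have eHp2 : (fun x => H q1 q2 p1 x)
      = fun x => (p1^2 + x^2)/2 + ((q1^2+q2^2)^2 + a*q1^2 + b*q2^2) :=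
    funext fun x => by rw [hH]; try ring
  have eHq1 : (fun x => H x q2 p1 p2)
      = fun x => (x^2+q2^2)^2 + a*x^2 + ((p1^2+p2^2)/2 + b*q2^2) :=
    funext fun x => by rw [hH]; try ring
  have eHq2 : (fun x => H q1 x p1 p2)
      = fun x => (q1^2+x^2)^2 + b*x^2 + ((p1^2+p2^2)/2 + a*q1^2) :=
    funext fun x => by rw [hH]; try ring
  have eFq1 : (fun x => F x q2 p1 p2)
      = fun x => (p2*x - p1*q2)^2 - (2*x^4 + (2*x^2)*q2^2 + (2*a)*x^2 + p1^2)*(a-b) :=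
    funext fun x => by rw [hF]; try ring
  have eFq2 : (fun x => F q1 x p1 p2)
      = fun x => (p2*q1 - p1*x)^2 - (2*q1^4 + (2*q1^2)*x^2 + 2*a*q1^2 + p1^2)*(a-b) :=
    funext fun x => by rw [hF]; try ring
  have eFp1 : (fun x => F q1 q2 x p2)
      = fun x => (p2*q1 - x*q2)^2 - (x^2 + (2*q1^4 + 2*q1^2*q2^2 + 2*a*q1^2))*(a-b) :=
    funext fun x => by rw [hF]; try ring
  have eFp2 : (fun x => F q1 q2 p1 x)
      = fun x => (x*q1 - p1*q2)^2 - (2*q1^4 + 2*q1^2*q2^2 + 2*a*q1^2 + p1^2)*(a-b) :=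
    funext fun x => by rw [hF]; try ring
  rw [eHp1, eHp2, eHq1, eHq2, eFq1, eFq2, eFp1, eFp2]
  have dHp1 := ((((hasDerivAt_pow 2 p1).add_const (p2^2)).div_const 2).add_const
      ((q1^2+q2^2)^2 + a*q1^2 + b*q2^2)).deriv
  have dHp2 := ((((hasDerivAt_pow 2 p2).const_add (p1^2)).div_const 2).add_const
      ((q1^2+q2^2)^2 + a*q1^2 + b*q2^2)).deriv
  have dHq1 := (((((hasDerivAt_pow 2 q1).add_const (q2^2)).pow 2).add
      ((hasDerivAt_pow 2 q1).const_mul a)).add_const ((p1^2+p2^2)/2 + b*q2^2)).deriv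
  have dHq2 := (((((hasDerivAt_pow 2 q2).const_add (q1^2)).pow 2).add
      ((hasDerivAt_pow 2 q2).const_mul b)).add_const ((p1^2+p2^2)/2 + a*q1^2)).deriv
  have A1 : HasDerivAt (fun x : ℝ => 2*x^4 + 2*x^2*q2^2 + 2*a*x^2 + p1^2)
      (2*(4*q1^3) + 2*(2*q1)*q2^2 + 2*a*(2*q1)) q1 := by
    have h := ((((hasDerivAt_pow 4 q1).const_mul 2).add
        (((hasDerivAt_pow 2 q1).const_mul 2).mul_const (q2^2))).add
        ((hasDerivAt_pow 2 q1).const_mul (2*a))).add_const (p1^2)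
    exact h.congr_deriv (by push_cast; ring)
  have dFq1 := (((((hasDerivAt_id' (x := q1)).const_mul p2).sub_const (p1*q2)).pow 2).sub
      (A1.mul_const (a-b))).deriv
  have A2 : HasDerivAt (fun x : ℝ => 2*q1^4 + 2*q1^2*x^2 + 2*a*q1^2 + p1^2)
      (2*q1^2*(2*q2)) q2 := by
    have h := ((((hasDerivAt_pow 2 q2).const_mul (2*q1^2)).const_add (2*q1^4)).add_const
        (2*a*q1^2)).add_const (p1^2)
    exact h.congr_deriv (by push_cast; ring)
  have dFq2 := (((((hasDerivAt_id' (x := q2)).const_mul p1).const_sub (p2*q1)).pow 2).sub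
      (A2.mul_const (a-b))).deriv
  have dFp1 := (((((hasDerivAt_id' (x := p1)).mul_const q2).const_sub (p2*q1)).pow 2).sub
      (((hasDerivAt_pow 2 p1).add_const
        (2*q1^4 + 2*q1^2*q2^2 + 2*a*q1^2)).mul_const (a-b))).deriv
  have dFp2 := (((((hasDerivAt_id' (x := p2)).mul_const q1).sub_const (p1*q2)).pow 2).sub_const
      ((2*q1^4 + 2*q1^2*q2^2 + 2*a*q1^2 + p1^2)*(a-b))).deriv
  erw [dHp1, dHp2, dHq1, dHq2, dFq1, dFq2, dFp1, dFp2]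
  ring
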